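/- arXiv:0910.3830 — 2 statements merged into one kernel-verified Lean document; each statement's English description precedes it below -/
import Mathlib

section
/- If a sequence h_• of nonnegative integers is unimodal at each tail, then there exists an almost reverse lexicographic ideal I in the polynomial ring k[x_1,...,x_n] (with n = h_1 if h_1 ≥ 1, n = 1 otherwise) such that dim_k(k[x_1,...,x_n]/I)_d = h_d for all d ≥ 0. -/
open scoped Classical

/-- Degree of an exponent vector (monomial). -/
def mdeg {n : ℕ} (m : Fin n → ℕ) : ℕ := ∑ i, m i

/-- Degree reverse lexicographic order: `M > N`. -/
def RevLexGT {n : ℕ} (M N : Fin n → ℕ) : Prop :=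
  mdeg N < mdeg M ∨
    (mdeg M = mdeg N ∧ ∃ s : Fin n, (∀ i : Fin n, s < i → M i = N i) ∧ M s < N s)

/-- A monomial ideal, identified with its set of monomials (exponent vectors),
is upward closed under divisibility. -/
def MonIdeal {n : ℕ} (I : Set (Fin n → ℕ)) : Prop :=
  ∀ m ∈ I, ∀ m' : Fin n → ℕ, (∀ i, m i ≤ m' i) → m' ∈ I

/-- `m` is a minimal generator of the monomial ideal `I`. -/
def MinGen {n : ℕ} (I : Set (Fin n → ℕ)) (m : Fin n → ℕ) : Prop :=
  m ∈ I ∧ ∀ m' ∈ I, (∀ i, m' i ≤ m i) → m' = m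

/-- Almost reverse lexicographic ideal. -/
def ARL {n : ℕ} (I : Set (Fin n → ℕ)) : Prop :=
  ∀ M N : Fin n → ℕ, MinGen I N → mdeg M = mdeg N → RevLexGT M N → M ∈ I

/-- Strongly stable monomial ideal. -/
def StronglyStable {n : ℕ} (I : Set (Fin n → ℕ)) : Prop :=
  MonIdeal I ∧ ∀ M ∈ I, ∀ i j : Fin n, j < i → 0 < M i →
    (fun k => if k = i then M i - 1 else if k = j then M j + 1 else M k) ∈ I

/-- The last generator `M_ω` of a monomial ideal: a minimal generator of maximal
degree which is smallest in the degree reverse lexicographic order among the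
minimal generators of that degree. -/
def IsLastGen {n : ℕ} (I : Set (Fin n → ℕ)) (W : Fin n → ℕ) : Prop :=
  MinGen I W ∧ (∀ N, MinGen I N → mdeg N ≤ mdeg W) ∧
    (∀ N, MinGen I N → mdeg N = mdeg W → N = W ∨ RevLexGT N W)

/-- `max M`: the largest (1-based) index of a variable dividing `M` (0 for `M = 1`). -/
def maxVar {n : ℕ} (m : Fin n → ℕ) : ℕ :=
  Finset.univ.sup (fun i : Fin n => if 0 < m i then i.1 + 1 else 0)

/-- Hilbert function of `R/I`: the number of monomials of degree `d` not in `I`. -/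
noncomputable def hilb {n : ℕ} (I : Set (Fin n → ℕ)) (d : ℕ) : ℕ :=
  Set.ncard {m : Fin n → ℕ | mdeg m = d ∧ m ∉ I}

/-- Truncation of an exponent vector to its first `i` coordinates. -/
def truncW {n : ℕ} (W : Fin n → ℕ) (i : ℕ) : Fin n → ℕ :=
  fun j => if j.1 < i then W j else 0

/-- The set `𝓘_i` (for `i ≤ μ-2`): exponent vectors supported on the first `i`
coordinates, coordinatewise below the `f_j`'s, i.e. not lying in `I`. -/
def Iset {n : ℕ} (I : Set (Fin n → ℕ)) (i : ℕ) : Set (Fin n → ℕ) :=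
  {α | (∀ k : Fin n, i ≤ k.1 → α k = 0) ∧ α ∉ I}

/-- The set `𝓘_{μ-1}`, which additionally requires `α ≥ (ω_1,…,ω_{μ-1})`. -/
def IsetLast {n : ℕ} (I : Set (Fin n → ℕ)) (W : Fin n → ℕ) (μ : ℕ) :
    Set (Fin n → ℕ) :=
  {α | α ∈ Iset I (μ - 1) ∧ (α = truncW W (μ - 1) ∨ RevLexGT α (truncW W (μ - 1)))}

/-- `f_{i+1}(α) = min {t : x^α x_{i+1}^t ∈ I}` (ℕ-valued, junk `0` if no such `t`). -/
noncomputable def fmin {n : ℕ} (I : Set (Fin n → ℕ)) (α : Fin n → ℕ) (i : Fin n) : ℕ :=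
  sInf {t | α + Pi.single i t ∈ I}

/-- `f_{i+1}(α)` valued in `ℕ∞` (equal to `⊤` when no power works). -/
noncomputable def fminTop {n : ℕ} (I : Set (Fin n → ℕ)) (α : Fin n → ℕ) (i : Fin n) : ℕ∞ :=
  sInf ((fun t : ℕ => (t : ℕ∞)) '' {t | α + Pi.single i t ∈ I})

/-- Iterated truncated difference sequence `h^{(i)}`. -/
def hseq (h : ℕ → ℕ) : ℕ → ℕ → ℕ
  | 0, d => h d
  | _ + 1, 0 => 1
  | i + 1, e + 1 => hseq h i (e + 1) - hseq h i e

/-- The set whose infimum is `r_i(h)`. -/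
def rset (h : ℕ → ℕ) (i : ℕ) : Set ℕ :=
  {d | 1 ≤ d ∧ hseq h i d ≤ hseq h i (d - 1)}

/-- `D(h) = min {i : r_i < ∞}`. -/
noncomputable def Dval (h : ℕ → ℕ) : ℕ := sInf {i | (rset h i).Nonempty}

/-- `h` is unimodal at each tail. -/
def UnimodalAtTails (h : ℕ → ℕ) : Prop :=
  ∀ i, Dval h ≤ i → i < max 1 (h 1) →
    ∀ d, (∃ r ∈ rset h i, r ≤ d) → hseq h i d ≤ hseq h i (d - 1)

/-- The polynomial `Π (1 - z^{d_i})`. -/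
noncomputable def froPoly (ds : List ℕ) : Polynomial ℤ :=
  (ds.map (fun d => 1 - Polynomial.X ^ d)).prod

/-- Coefficient of `z^i` in the power series `Π (1 - z^{d_i}) / (1-z)^n`. -/
noncomputable def froCoeff (n : ℕ) (ds : List ℕ) (i : ℕ) : ℤ :=
  ∑ j ∈ Finset.range (i + 1),
    (froPoly ds).coeff j * (Nat.choose (n - 1 + (i - j)) (i - j) : ℤ)

/-- The Fröberg sequence `|n; d_1,…,d_m|`: the truncation `| · |` of the power
series `Π (1 - z^{d_i}) / (1-z)^n`. -/
noncomputable def fro (n : ℕ) (ds : List ℕ) (i : ℕ) : ℕ :=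
  if ∀ j ≤ i, 0 < froCoeff n ds j then (froCoeff n ds i).toNat else 0

namespace ARLaux

open Finset

variable {n : ℕ}

theorem rlex_irrefl (A : Fin n → ℕ) : ¬ RevLexGT A A := by
  rintro (hlt | ⟨-, s, -, hs⟩) <;> omega

theorem rlex_trans {A B C : Fin n → ℕ} (h1 : RevLexGT A B) (h2 : RevLexGT B C) :
    RevLexGT A C := by
  rcases h1 with hlt1 | ⟨hdeg1, s1, heq1, hlt1⟩
  · rcases h2 with hlt2 | ⟨hdeg2, s2, heq2, hlt2⟩
    · exact Or.inl (lt_trans hlt2 hlt1)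
    · exact Or.inl (hdeg2 ▸ hlt1)
  · rcases h2 with hlt2 | ⟨hdeg2, s2, heq2, hlt2⟩
    · exact Or.inl (hdeg1 ▸ hlt2)
    · refine Or.inr ⟨hdeg1.trans hdeg2, ?_⟩
      rcases lt_trichotomy s1 s2 with hs | hs | hs
      · exact ⟨s2, fun i hi => (heq1 i (hs.trans hi)).trans (heq2 i hi),
          (heq1 s2 hs) ▸ hlt2⟩
      · subst hs
        exact ⟨s1, fun i hi => (heq1 i hi).trans (heq2 i hi), lt_trans hlt1 hlt2⟩
      · exact ⟨s1, fun i hi => (heq1 i hi).trans (heq2 i (hs.trans hi)),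
          hlt1.trans_eq (heq2 s1 hs)⟩

theorem rlex_total {A B : Fin n → ℕ} (hne : A ≠ B) : RevLexGT A B ∨ RevLexGT B A := by
  rcases lt_trichotomy (mdeg A) (mdeg B) with hd | hd | hd
  · exact Or.inr (Or.inl hd)
  · have hDne : (Finset.univ.filter (fun i : Fin n => A i ≠ B i)).Nonempty := by
      by_contra hcon
      rw [Finset.not_nonempty_iff_eq_empty, Finset.filter_eq_empty_iff] at hcon
      exact hne (funext fun i => not_not.mp (hcon (Finset.mem_univ i)))
    set s := (Finset.univ.filter (fun i : Fin n => A i ≠ B i)).max' hDne with hs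
    have hsmem : A s ≠ B s := by
      have := Finset.max'_mem _ hDne
      rw [Finset.mem_filter] at this
      exact this.2
    have heq : ∀ i : Fin n, s < i → A i = B i := by
      intro i hi
      by_contra hiA
      exact absurd (Finset.le_max' _ i (Finset.mem_filter.mpr ⟨Finset.mem_univ i, hiA⟩))
        (not_le.mpr hi)
    rcases lt_or_gt_of_ne hsmem with hlt | hlt
    · exact Or.inl (Or.inr ⟨hd, s, heq, hlt⟩)
    · exact Or.inr (Or.inr ⟨hd.symm, s, fun i hi => (heq i hi).symm, hlt⟩)
  · exact Or.inl (Or.inl hd)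

/-! ### monomial moves -/

def addE (i : Fin n) (m : Fin n → ℕ) : Fin n → ℕ := fun k => if k = i then m i + 1 else m k
def subE (i : Fin n) (m : Fin n → ℕ) : Fin n → ℕ := fun k => if k = i then m i - 1 else m k

@[simp] theorem addE_self (i : Fin n) (m : Fin n → ℕ) : addE i m i = m i + 1 := by
  simp [addE]
@[simp] theorem subE_self (i : Fin n) (m : Fin n → ℕ) : subE i m i = m i - 1 := by
  simp [subE]
theorem addE_ne {i k : Fin n} (m : Fin n → ℕ) (hk : k ≠ i) : addE i m k = m k := by
  simp [addE, hk]
theorem subE_ne {i k : Fin n} (m : Fin n → ℕ) (hk : k ≠ i) : subE i m k = m k := by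
  simp [subE, hk]

theorem mdeg_addE (i : Fin n) (m : Fin n → ℕ) : mdeg (addE i m) = mdeg m + 1 := by
  have : addE i m = fun k => m k + (if k = i then 1 else 0) := by
    funext k
    by_cases hk : k = i <;> simp [addE, hk]
  rw [mdeg, this]
  rw [Finset.sum_add_distrib, Finset.sum_ite_eq' Finset.univ i (fun _ => 1)]
  simp [mdeg]

theorem subE_addE (i : Fin n) (m : Fin n → ℕ) : subE i (addE i m) = m := by
  funext k
  by_cases hk : k = i <;> simp [subE, addE, hk]

theorem addE_subE {i : Fin n} {m : Fin n → ℕ} (hpos : 0 < m i) : addE i (subE i m) = m := by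
  funext k
  by_cases hk : k = i <;> simp [subE, addE, hk] <;> omega

theorem mdeg_subE {i : Fin n} {m : Fin n → ℕ} (hpos : 0 < m i) :
    mdeg (subE i m) + 1 = mdeg m := by
  conv_rhs => rw [← addE_subE hpos]
  rw [mdeg_addE]

theorem subE_addE_comm {i j : Fin n} (hij : i ≠ j) (m : Fin n → ℕ) :
    subE i (addE j m) = addE j (subE i m) := by
  funext k
  rcases eq_or_ne k i with rfl | hki
  · simp [subE, addE, hij]
  · rcases eq_or_ne k j with rfl | hkj
    · simp [subE, addE, hki, Ne.symm hij]
    · simp [subE, addE, hki, hkj]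

theorem subE_subE_comm (i j : Fin n) (m : Fin n → ℕ) :
    subE i (subE j m) = subE j (subE i m) := by
  rcases eq_or_ne i j with rfl | hij
  · rfl
  · funext k
    rcases eq_or_ne k i with rfl | hki
    · simp [subE, hij]
    · rcases eq_or_ne k j with rfl | hkj
      · simp [subE, Ne.symm hij]
      · simp [subE, hki, hkj]

theorem mdeg_eq_zero {m : Fin n → ℕ} (hm : mdeg m = 0) : m = fun _ => 0 := by
  funext i
  have := Finset.sum_eq_zero_iff.mp hm i (Finset.mem_univ i)
  exact this

theorem exists_pos_of_mdeg_pos {m : Fin n → ℕ} (hm : 0 < mdeg m) : ∃ i, 0 < m i := by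
  by_contra hcon
  push_neg at hcon
  have : m = fun _ => 0 := funext fun i => Nat.le_zero.mp (hcon i)
  rw [mdeg, this] at hm
  simp at hm

theorem coord_le_mdeg (m : Fin n → ℕ) (i : Fin n) : m i ≤ mdeg m :=
  Finset.single_le_sum (fun j _ => Nat.zero_le (m j)) (Finset.mem_univ i)

/-! ### maxVar lemmas -/

theorem maxVar_le_iff {m : Fin n → ℕ} {j : ℕ} :
    maxVar m ≤ j ↔ ∀ i : Fin n, 0 < m i → i.1 + 1 ≤ j := by
  rw [maxVar, Finset.sup_le_iff]
  constructor
  · intro H i hi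
    have := H i (Finset.mem_univ i)
    rwa [if_pos hi] at this
  · intro H i _
    by_cases hi : 0 < m i
    · rw [if_pos hi]; exact H i hi
    · rw [if_neg hi]; exact Nat.zero_le j

theorem le_maxVar {m : Fin n → ℕ} {i : Fin n} (hi : 0 < m i) : i.1 + 1 ≤ maxVar m := by
  rw [maxVar]
  calc i.1 + 1 = (if 0 < m i then i.1 + 1 else 0) := by rw [if_pos hi]
    _ ≤ _ := Finset.le_sup (f := fun i : Fin n => if 0 < m i then i.1 + 1 else 0)
      (Finset.mem_univ i)

theorem maxVar_le_n (m : Fin n → ℕ) : maxVar m ≤ n :=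
  maxVar_le_iff.mpr fun i _ => i.2

theorem maxVar_pos_coord {m : Fin n → ℕ} {k : Fin n} (hv : maxVar m = k.1 + 1) :
    0 < m k := by
  obtain ⟨i, -, hi⟩ := Finset.exists_mem_eq_sup Finset.univ ⟨k, Finset.mem_univ k⟩
    (fun i : Fin n => if 0 < m i then i.1 + 1 else 0)
  rw [maxVar] at hv
  rw [hv] at hi
  by_cases hpos : 0 < m i
  · rw [if_pos hpos] at hi
    have : i = k := Fin.ext (by omega)
    rwa [← this]
  · rw [if_neg hpos] at hi
    omega

theorem maxVar_addE {m : Fin n → ℕ} {k : Fin n} (hle : maxVar m ≤ k.1 + 1) :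
    maxVar (addE k m) = k.1 + 1 := by
  apply le_antisymm
  · rw [maxVar_le_iff]
    intro i hi
    rcases eq_or_ne i k with rfl | hik
    · omega
    · rw [addE_ne m hik] at hi
      exact le_trans (le_maxVar hi) hle
  · exact le_maxVar (by simp)

theorem maxVar_subE_le (i : Fin n) (m : Fin n → ℕ) : maxVar (subE i m) ≤ maxVar m := by
  rw [maxVar_le_iff]
  intro l hl
  apply le_maxVar
  rcases eq_or_ne l i with rfl | hli
  · rw [subE_self] at hl; omega
  · rwa [subE_ne m hli] at hl

theorem rlex_of_maxVar {A B : Fin n → ℕ} {j : ℕ} (hdeg : mdeg A = mdeg B)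
    (hA : maxVar A ≤ j) (hB : j < maxVar B) : RevLexGT A B := by
  have hBn : maxVar B ≤ n := maxVar_le_n B
  have hB1 : 1 ≤ maxVar B := by omega
  set s : Fin n := ⟨maxVar B - 1, by omega⟩ with hs
  have hsv : maxVar B = s.1 + 1 := by simp [hs]; omega
  refine Or.inr ⟨hdeg, s, ?_, ?_⟩
  · intro i hi
    have his : s.1 < i.1 := hi
    have hBz : B i = 0 := by
      by_contra hpos
      have := le_maxVar (Nat.pos_of_ne_zero hpos)
      omega
    have hAz : A i = 0 := by
      by_contra hpos
      have := le_maxVar (m := A) (Nat.pos_of_ne_zero hpos)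
      omega
    rw [hAz, hBz]
  · have hBs : 0 < B s := maxVar_pos_coord hsv
    have hAs : A s = 0 := by
      by_contra hpos
      have := le_maxVar (m := A) (Nat.pos_of_ne_zero hpos)
      simp [hs] at this
      omega
    omega

theorem rlex_bmov {m : Fin n → ℕ} {i j : Fin n} (hij : i < j) (hpos : 0 < m i) :
    RevLexGT m (addE j (subE i m)) := by
  have hne : i ≠ j := ne_of_lt hij
  refine Or.inr ⟨?_, j, ?_, ?_⟩
  · rw [mdeg_addE]
    rw [mdeg_subE hpos]
  · intro l hl
    have hlj : l ≠ j := by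
      intro hcon; subst hcon; exact lt_irrefl _ hl
    have hli : l ≠ i := by
      intro hcon; subst hcon
      exact absurd (hij.trans hl) (lt_irrefl _)
    rw [addE_ne _ hlj, subE_ne _ hli]
  · rw [addE_self, subE_ne _ (Ne.symm hne)]
    omega

end ARLaux
namespace ARLaux

open Finset

/-- Counting elements of a "bottom segment with the bottom part `B` removed"
in a finite strictly totally ordered set. -/
theorem seg_count {α : Type*} [DecidableEq α] (r : α → α → Prop) [DecidableRel r]
    (htr : ∀ {a b c}, r a b → r b c → r a c) (hirr : ∀ a, ¬ r a a)
    (T B : Finset α) (htot : ∀ x ∈ T, ∀ y ∈ T, x = y ∨ r x y ∨ r y x)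
    (hBT : B ⊆ T) (hlow : ∀ b ∈ B, ∀ a ∈ T, a ∉ B → r b a) (k : ℕ) (hk : k ≤ T.card) :
    (T.filter (fun x => (T.filter (fun y => y = x ∨ r y x)).card ≤ k ∧ x ∉ B)).card
      = k - B.card := by
  classical
  set N := T.card with hN
  set rk : α → ℕ := fun x => (T.filter (fun y => y = x ∨ r y x)).card with hrk
  have hrk_mono : ∀ x ∈ T, ∀ y ∈ T, r x y → rk x < rk y := by
    intro x hx y hy hxy
    apply Finset.card_lt_card
    rw [Finset.ssubset_iff_of_subset]
    · refine ⟨y, Finset.mem_filter.mpr ⟨hy, Or.inl rfl⟩, ?_⟩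
      intro hmem
      rcases (Finset.mem_filter.mp hmem).2 with rfl | hyx
      · exact hirr _ hxy
      · exact hirr _ (htr hyx hxy)
    · intro z hz
      rw [Finset.mem_filter] at hz ⊢
      refine ⟨hz.1, ?_⟩
      rcases hz.2 with rfl | hzx
      · exact Or.inr hxy
      · exact Or.inr (htr hzx hxy)
  have hrk_inj : ∀ x ∈ T, ∀ y ∈ T, rk x = rk y → x = y := by
    intro x hx y hy hxy
    rcases htot x hx y hy with h | h | h
    · exact h
    · exact absurd hxy (Nat.ne_of_lt (hrk_mono x hx y hy h))
    · exact absurd hxy.symm (Nat.ne_of_lt (hrk_mono y hy x hx h))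
  have hrk_mem : ∀ x ∈ T, rk x ∈ Finset.Icc 1 N := by
    intro x hx
    rw [Finset.mem_Icc]
    constructor
    · rw [Nat.one_le_iff_ne_zero, ← Nat.pos_iff_ne_zero, Finset.card_pos]
      exact ⟨x, Finset.mem_filter.mpr ⟨hx, Or.inl rfl⟩⟩
    · exact Finset.card_le_card (Finset.filter_subset _ _)
  have hinjT : Set.InjOn rk ↑T := fun x hx y hy => hrk_inj x hx y hy
  have himg : T.image rk = Finset.Icc 1 N := by
    apply Finset.eq_of_subset_of_card_le
    · intro s hs
      obtain ⟨x, hx, rfl⟩ := Finset.mem_image.mp hs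
      exact hrk_mem x hx
    · rw [Finset.card_image_of_injOn hinjT, Nat.card_Icc]
      omega
  have hBcard : B.card ≤ N := Finset.card_le_card hBT
  have hBimg : B.image rk = Finset.Icc 1 B.card := by
    have hBsub : ∀ b ∈ B, rk b ≤ B.card := by
      intro b hb
      have hsub : Finset.Icc 1 (rk b) ⊆ B.image rk := by
        intro s hs
        rw [Finset.mem_Icc] at hs
        have hsN : s ∈ Finset.Icc 1 N := by
          rw [Finset.mem_Icc]
          have := (Finset.mem_Icc.mp (hrk_mem b (hBT hb))).2
          omega
        rw [← himg] at hsN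
        obtain ⟨a, ha, rfl⟩ := Finset.mem_image.mp hsN
        by_cases haB : a ∈ B
        · exact Finset.mem_image.mpr ⟨a, haB, rfl⟩
        · exact absurd hs.2 (not_le.mpr (hrk_mono b (hBT hb) a ha (hlow b hb a ha haB)))
      calc rk b = (Finset.Icc 1 (rk b)).card := by rw [Nat.card_Icc]; omega
        _ ≤ (B.image rk).card := Finset.card_le_card hsub
        _ ≤ B.card := Finset.card_image_le
    apply Finset.eq_of_subset_of_card_le
    · intro s hs
      obtain ⟨b, hb, rfl⟩ := Finset.mem_image.mp hs
      rw [Finset.mem_Icc]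
      refine ⟨(Finset.mem_Icc.mp (hrk_mem b (hBT hb))).1, hBsub b hb⟩
    · rw [Finset.card_image_of_injOn (hinjT.mono (by exact_mod_cast hBT)), Nat.card_Icc]
      omega
  have hmemB_iff : ∀ x ∈ T, (x ∈ B ↔ rk x ≤ B.card) := by
    intro x hx
    constructor
    · intro hxB
      have : rk x ∈ Finset.Icc 1 B.card := hBimg ▸ Finset.mem_image.mpr ⟨x, hxB, rfl⟩
      exact (Finset.mem_Icc.mp this).2
    · intro hle
      have h1 : 1 ≤ rk x := (Finset.mem_Icc.mp (hrk_mem x hx)).1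
      have : rk x ∈ B.image rk := by
        rw [hBimg, Finset.mem_Icc]; exact ⟨h1, hle⟩
      obtain ⟨b, hb, hbeq⟩ := Finset.mem_image.mp this
      rwa [hrk_inj b (hBT hb) x hx hbeq] at hb
  rw [show (k - B.card) = (Finset.Icc (B.card + 1) k).card by rw [Nat.card_Icc]; omega]
  apply Finset.card_bij (fun x _ => rk x)
  · intro a ha
    rw [Finset.mem_filter] at ha
    obtain ⟨haT, hak, haB⟩ := ha
    rw [Finset.mem_Icc]
    refine ⟨?_, hak⟩
    have := (hmemB_iff a haT).not.mp haB
    omega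
  · intro x hx y hy
    exact hrk_inj x (Finset.mem_filter.mp hx).1 y (Finset.mem_filter.mp hy).1
  · intro s hs
    rw [Finset.mem_Icc] at hs
    have hsN : s ∈ Finset.Icc 1 N := Finset.mem_Icc.mpr ⟨by omega, le_trans hs.2 hk⟩
    rw [← himg] at hsN
    obtain ⟨a, ha, rfl⟩ := Finset.mem_image.mp hsN
    refine ⟨a, Finset.mem_filter.mpr ⟨ha, hs.2, ?_⟩, rfl⟩
    rw [hmemB_iff a ha]
    omega

end ARLaux
namespace ARLaux

open Finset

variable {n : ℕ}

/-- Monomials of degree `d` as a finset. -/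
noncomputable def MonF (n d : ℕ) : Finset (Fin n → ℕ) :=
  (Fintype.piFinset (fun _ : Fin n => Finset.range (d + 1))).filter (fun m => mdeg m = d)

theorem mem_MonF {d : ℕ} {m : Fin n → ℕ} : m ∈ MonF n d ↔ mdeg m = d := by
  rw [MonF, Finset.mem_filter]
  constructor
  · exact fun hm => hm.2
  · intro hm
    refine ⟨Fintype.mem_piFinset.mpr fun i => ?_, hm⟩
    rw [Finset.mem_range]
    have := coord_le_mdeg m i
    omega

/-- Monomials of degree `d` all of whose codegree-one divisors lie in `C`. -/
noncomputable def OsetF (C : Finset (Fin n → ℕ)) (d : ℕ) : Finset (Fin n → ℕ) :=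
  (MonF n d).filter (fun μ => ∀ i, 0 < μ i → subE i μ ∈ C)

theorem mem_OsetF {C : Finset (Fin n → ℕ)} {d : ℕ} {μ : Fin n → ℕ} :
    μ ∈ OsetF C d ↔ mdeg μ = d ∧ ∀ i, 0 < μ i → subE i μ ∈ C := by
  rw [OsetF, Finset.mem_filter, mem_MonF]

/-- Rank of a monomial in a finset, for the degrevlex order. -/
noncomputable def rkT (T : Finset (Fin n → ℕ)) (μ : Fin n → ℕ) : ℕ :=
  (T.filter (fun ν => ν = μ ∨ RevLexGT μ ν)).card

/-- The greedy complement sets: at each degree, the `h d` degrevlex-smallest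
monomials among those all of whose divisors already survived. -/
noncomputable def CF (h : ℕ → ℕ) (n : ℕ) : ℕ → Finset (Fin n → ℕ)
  | 0 => {fun _ => 0}
  | d + 1 => (OsetF (CF h n d) (d + 1)).filter
      (fun μ => rkT (OsetF (CF h n d) (d + 1)) μ ≤ h (d + 1))

theorem mem_CF_mdeg {h : ℕ → ℕ} {d : ℕ} {m : Fin n → ℕ} (hm : m ∈ CF h n d) :
    mdeg m = d := by
  cases d with
  | zero =>
    rw [CF, Finset.mem_singleton] at hm
    subst hm
    simp [mdeg]
  | succ d =>
    rw [CF, Finset.mem_filter, mem_OsetF] at hm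
    exact hm.1.1

theorem rkT_mono {T : Finset (Fin n → ℕ)} {μ ν : Fin n → ℕ}
    (hgt : RevLexGT μ ν) : rkT T ν ≤ rkT T μ := by
  apply Finset.card_le_card
  intro x hx
  rw [Finset.mem_filter] at hx ⊢
  refine ⟨hx.1, Or.inr ?_⟩
  rcases hx.2 with rfl | hxν
  · exact hgt
  · exact rlex_trans hgt hxν

/-- Segment property: `CF` is downward closed in `OsetF` w.r.t. degrevlex. -/
theorem CF_seg {h : ℕ → ℕ} {d : ℕ} {μ ν : Fin n → ℕ} (hμ : μ ∈ CF h n (d + 1))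
    (hν : ν ∈ OsetF (CF h n d) (d + 1)) (hle : ν = μ ∨ RevLexGT μ ν) :
    ν ∈ CF h n (d + 1) := by
  rcases hle with rfl | hgt
  · exact hμ
  · rw [CF, Finset.mem_filter] at hμ ⊢
    exact ⟨hν, le_trans (rkT_mono hgt) hμ.2⟩

theorem CF_mem_Oset {h : ℕ → ℕ} {d : ℕ} {μ : Fin n → ℕ} (hμ : μ ∈ CF h n (d + 1)) :
    μ ∈ OsetF (CF h n d) (d + 1) := by
  rw [CF, Finset.mem_filter] at hμ
  exact hμ.1

theorem CF_down {h : ℕ → ℕ} {d : ℕ} {μ : Fin n → ℕ} (hμ : μ ∈ CF h n (d + 1))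
    {i : Fin n} (hi : 0 < μ i) : subE i μ ∈ CF h n d :=
  (mem_OsetF.mp (CF_mem_Oset hμ)).2 i hi

/-- The complement sets are closed under inverse Borel moves. -/
theorem CF_borel {h : ℕ → ℕ} : ∀ d : ℕ, ∀ m ∈ CF h n d, ∀ i j : Fin n, i < j →
    0 < m i → addE j (subE i m) ∈ CF h n d := by
  intro d
  induction d with
  | zero =>
    intro m hm i j hij hpos
    rw [CF, Finset.mem_singleton] at hm
    subst hm
    simp at hpos
  | succ d ih =>
    intro m hm i j hij hpos
    have hijne : i ≠ j := ne_of_lt hij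
    have hmO := CF_mem_Oset hm
    rw [mem_OsetF] at hmO
    set m' : Fin n → ℕ := addE j (subE i m) with hm'
    have hm'O : m' ∈ OsetF (CF h n d) (d + 1) := by
      rw [mem_OsetF]
      constructor
      · rw [hm', mdeg_addE, mdeg_subE hpos, hmO.1]
      · intro l hl
        rcases eq_or_ne l j with rfl | hlj
        · have : subE l m' = subE i m := by
            rw [hm', subE_addE]
          rw [this]
          exact hmO.2 i hpos
        · have hml : 0 < m l := by
            rcases eq_or_ne l i with rfl | hli
            · rw [hm', addE_ne _ hlj, subE_self] at hl
              omega
            · rwa [hm', addE_ne _ hlj, subE_ne _ hli] at hl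
          have hcomm : subE l m' = addE j (subE i (subE l m)) := by
            rw [hm', subE_addE_comm hlj, subE_subE_comm]
          rw [hcomm]
          apply ih (subE l m) (hmO.2 l hml) i j hij
          rcases eq_or_ne l i with rfl | hli
          · rw [hm', addE_ne _ hlj, subE_self] at hl
            rw [subE_self]
            omega
          · rw [subE_ne _ (Ne.symm hli)]
            exact hpos
    exact CF_seg hm hm'O (Or.inr (rlex_bmov hij hpos))

end ARLaux
namespace ARLaux

theorem hseq_zero {h : ℕ → ℕ} (h0 : h 0 = 1) (i : ℕ) : hseq h i 0 = 1 := by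
  cases i with
  | zero => exact h0
  | succ i => rfl

theorem hseq_succ (h : ℕ → ℕ) (i e : ℕ) :
    hseq h (i + 1) (e + 1) = hseq h i (e + 1) - hseq h i e := rfl

theorem hseq_one {h : ℕ → ℕ} (h0 : h 0 = 1) (i : ℕ) : hseq h i 1 = h 1 - i := by
  induction i with
  | zero => rfl
  | succ i ih =>
    rw [hseq_succ, ih, hseq_zero h0]
    omega

/-- The iterated difference identity (pure truncated-subtraction algebra). -/
theorem hseq_sub (h : ℕ → ℕ) (d : ℕ) : ∀ i : ℕ,
    hseq h i (d + 1) = h (d + 1) - ∑ l ∈ Finset.range i, hseq h l d := by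
  intro i
  induction i with
  | zero => simp [hseq]
  | succ i ih =>
    rw [hseq_succ, ih, Finset.sum_range_succ, Nat.sub_sub]

/-- Key consequence of unimodality at tails: the `n`-th iterated difference
vanishes in positive degrees, where `n = max (h 1) 1`. -/
theorem hseq_top_eq_zero {h : ℕ → ℕ} (h0 : h 0 = 1) (hu : UnimodalAtTails h)
    {d : ℕ} (hd : 1 ≤ d) : hseq h (max (h 1) 1) d = 0 := by
  set n := max (h 1) 1 with hn
  by_contra hne
  obtain ⟨e, rfl⟩ : ∃ e, d = e + 1 := ⟨d - 1, by omega⟩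
  have step : ∀ i, hseq h (i + 1) (e + 1) ≠ 0 →
      hseq h i e < hseq h i (e + 1) := by
    intro i hi
    rw [hseq_succ] at hi
    omega
  have chain : ∀ j, j ≤ n → hseq h (n - j) (e + 1) ≠ 0 := by
    intro j
    induction j with
    | zero => intro _; simpa using hne
    | succ j ih =>
      intro hj
      have hprev := ih (by omega)
      rcases Nat.eq_zero_or_pos (n - j) with hz | hpos
      · rw [show n - (j + 1) = 0 by omega]
        rwa [hz] at hprev
      · have : n - j = (n - (j + 1)) + 1 := by omega
        rw [this] at hprev
        have := step _ hprev
        omega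
  have gtI : ∀ i, i < n → hseq h i e < hseq h i (e + 1) := by
    intro i hi
    have := chain (n - (i + 1)) (by omega)
    rw [show n - (n - (i + 1)) = i + 1 by omega] at this
    exact step i this
  have noR : ∀ i, i < n → 1 ∉ rset h i := by
    intro i hi hmem
    have hD : Dval h ≤ i := Nat.sInf_le ⟨1, hmem⟩
    have hmax : i < max 1 (h 1) := by
      rw [max_comm]
      exact hi
    have := hu i hD hmax (e + 1) ⟨1, hmem, by omega⟩
    have hgt := gtI i hi
    simp only [show e + 1 - 1 = e by omega] at this
    omega
  have h2 : ∀ i, i < n → 2 ≤ hseq h i 1 := by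
    intro i hi
    have := noR i hi
    rw [rset] at this
    simp only [Set.mem_setOf_eq, not_and, not_le] at this
    have h1le := this (le_refl 1)
    rw [show (1:ℕ) - 1 = 0 by omega, hseq_zero h0] at h1le
    omega
  have hlast := h2 (n - 1) (by omega)
  rw [hseq_one h0] at hlast
  have : h 1 ≤ n := le_max_left _ _
  omega

/-- Growth bound: room for the next degree. -/
theorem growth_bound {h : ℕ → ℕ} (h0 : h 0 = 1) (hu : UnimodalAtTails h) (d : ℕ) :
    h (d + 1) ≤ ∑ l ∈ Finset.range (max (h 1) 1), hseq h l d := by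
  have hz := hseq_top_eq_zero h0 hu (d := d + 1) (by omega)
  rw [hseq_sub h d (max (h 1) 1)] at hz
  omega

end ARLaux
namespace ARLaux

open Finset

variable {n : ℕ}

/-- Main counting theorem: for every degree `d` and `j ≤ n`, the number of
surviving monomials of degree `d` in the first `j` variables is the `(n-j)`-th
iterated truncated difference of `h` at `d`. -/
theorem Pmain {h : ℕ → ℕ} (h0 : h 0 = 1)
    (hgrow : ∀ d, h (d + 1) ≤ ∑ l ∈ Finset.range n, hseq h l d) :
    ∀ d, ∀ j, j ≤ n →
      ((CF h n d).filter (fun m => maxVar m ≤ j)).card = hseq h (n - j) d := by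
  intro d
  induction d with
  | zero =>
    intro j hj
    have heq : (CF h n 0).filter (fun m => maxVar m ≤ j) = {fun _ => 0} := by
      rw [CF]
      apply Finset.filter_true_of_mem
      intro m hm
      rw [Finset.mem_singleton] at hm
      subst hm
      have hz : maxVar (fun _ : Fin n => 0) ≤ 0 :=
        maxVar_le_iff.mpr (by intro i hi; simp at hi)
      omega
    rw [heq, Finset.card_singleton]
    exact (hseq_zero h0 _).symm
  | succ d ih =>
    have hOdeg : ∀ μ ∈ OsetF (CF h n d) (d + 1), mdeg μ = d + 1 :=
      fun μ hμ => (mem_OsetF.mp hμ).1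
    -- fiber counts via the shift bijection
    have fib : ∀ v, 1 ≤ v → v ≤ n →
        ((OsetF (CF h n d) (d + 1)).filter (fun μ => maxVar μ = v)).card
          = hseq h (n - v) d := by
      intro v hv1 hvn
      rw [← ih v hvn]
      apply Finset.card_bij (fun μ _ => subE (⟨v - 1, by omega⟩ : Fin n) μ)
      · intro μ hμ
        set k' : Fin n := ⟨v - 1, by omega⟩ with hk'
        rw [Finset.mem_filter] at hμ
        obtain ⟨hμO, hμv⟩ := hμ
        have hpos : 0 < μ k' := maxVar_pos_coord (by rw [hμv]; simp [hk']; omega)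
        rw [Finset.mem_filter]
        refine ⟨(mem_OsetF.mp hμO).2 k' hpos, ?_⟩
        have := maxVar_subE_le k' μ
        omega
      · intro μ1 h1 μ2 h2 heq
        set k' : Fin n := ⟨v - 1, by omega⟩ with hk'
        rw [Finset.mem_filter] at h1 h2
        have p1 : 0 < μ1 k' := maxVar_pos_coord (by rw [h1.2]; simp [hk']; omega)
        have p2 : 0 < μ2 k' := maxVar_pos_coord (by rw [h2.2]; simp [hk']; omega)
        calc μ1 = addE k' (subE k' μ1) := (addE_subE p1).symm
          _ = addE k' (subE k' μ2) := by rw [heq]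
          _ = μ2 := addE_subE p2
      · intro m hm
        set k' : Fin n := ⟨v - 1, by omega⟩ with hk'
        have hk'v : k'.1 + 1 = v := by simp [hk']; omega
        rw [Finset.mem_filter] at hm
        obtain ⟨hmC, hmv⟩ := hm
        refine ⟨addE k' m, ?_, subE_addE k' m⟩
        rw [Finset.mem_filter]
        constructor
        · rw [mem_OsetF]
          constructor
          · rw [mdeg_addE, mem_CF_mdeg hmC]
          · intro l hl
            rcases eq_or_ne l k' with rfl | hlk
            · rw [subE_addE]
              exact hmC
            · have hml : 0 < m l := by rwa [addE_ne _ hlk] at hl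
              have hlt : l < k' := by
                have hle1 := le_maxVar hml
                have hne : l.1 ≠ k'.1 := fun hc => hlk (Fin.ext hc)
                rw [Fin.lt_def]
                omega
              rw [subE_addE_comm hlk]
              exact CF_borel d m hmC l k' hlt hml
        · rw [maxVar_addE (by omega)]
          exact hk'v
    -- count of the upper part by maxVar
    have upper : ∀ t, ∀ j, j ≤ n → n - j = t →
        ((OsetF (CF h n d) (d + 1)).filter (fun μ => j < maxVar μ)).card
          = ∑ l ∈ Finset.range t, hseq h l d := by
      intro t
      induction t with
      | zero =>
        intro j hj hjt
        rw [Finset.sum_range_zero, Finset.card_eq_zero, Finset.filter_eq_empty_iff]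
        intro μ _
        have := maxVar_le_n μ
        omega
      | succ t iht =>
        intro j hj hjt
        have hsplit := Finset.card_filter_add_card_filter_not
          (s := (OsetF (CF h n d) (d + 1)).filter (fun μ => j < maxVar μ))
          (p := fun μ => j + 1 < maxVar μ)
        rw [Finset.filter_filter, Finset.filter_filter] at hsplit
        have e1 : (OsetF (CF h n d) (d + 1)).filter
              (fun μ => j < maxVar μ ∧ j + 1 < maxVar μ)
            = (OsetF (CF h n d) (d + 1)).filter (fun μ => j + 1 < maxVar μ) :=
          Finset.filter_congr (by intro μ _; constructor
                                  · exact fun hx => hx.2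
                                  · intro hx; exact ⟨by omega, hx⟩)
        have e2 : (OsetF (CF h n d) (d + 1)).filter
              (fun μ => j < maxVar μ ∧ ¬ j + 1 < maxVar μ)
            = (OsetF (CF h n d) (d + 1)).filter (fun μ => maxVar μ = j + 1) :=
          Finset.filter_congr (by intro μ _; constructor
                                  · intro hx; omega
                                  · intro hx; omega)
        rw [e1, e2] at hsplit
        have hfib := fib (j + 1) (by omega) (by omega)
        have ihv := iht (j + 1) (by omega) (by omega)
        rw [Finset.sum_range_succ]
        have ht' : n - (j + 1) = t := by omega
        rw [ht'] at hfib
        omega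
    -- the greedy pick has full size
    have hkO : h (d + 1) ≤ (OsetF (CF h n d) (d + 1)).card := by
      calc h (d + 1) ≤ ∑ l ∈ Finset.range n, hseq h l d := hgrow d
        _ = ((OsetF (CF h n d) (d + 1)).filter (fun μ => 0 < maxVar μ)).card :=
            (upper n 0 (by omega) (by omega)).symm
        _ ≤ (OsetF (CF h n d) (d + 1)).card :=
            Finset.card_le_card (Finset.filter_subset _ _)
    intro j hj
    have hseg := seg_count (r := fun a b : Fin n → ℕ => RevLexGT b a)
      (fun hab hbc => rlex_trans hbc hab) (fun a => rlex_irrefl a)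
      (OsetF (CF h n d) (d + 1))
      ((OsetF (CF h n d) (d + 1)).filter (fun μ => j < maxVar μ))
      (by
        intro x _ y _
        rcases eq_or_ne x y with rfl | hne
        · exact Or.inl rfl
        · rcases rlex_total hne with hxy | hyx
          · exact Or.inr (Or.inr hxy)
          · exact Or.inr (Or.inl hyx))
      (Finset.filter_subset _ _)
      (by
        intro b hb a ha haB
        rw [Finset.mem_filter] at hb
        have hamv : maxVar a ≤ j := by
          by_contra hcon
          exact haB (Finset.mem_filter.mpr ⟨ha, by omega⟩)
        exact rlex_of_maxVar (by rw [hOdeg a ha, hOdeg b hb.1]) hamv hb.2)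
      (h (d + 1)) hkO
    have hLHS : (CF h n (d + 1)).filter (fun m => maxVar m ≤ j)
        = (OsetF (CF h n d) (d + 1)).filter
            (fun x => ((OsetF (CF h n d) (d + 1)).filter
              (fun y => y = x ∨ RevLexGT x y)).card ≤ h (d + 1) ∧
              x ∉ (OsetF (CF h n d) (d + 1)).filter (fun μ => j < maxVar μ)) := by
      rw [CF, Finset.filter_filter]
      apply Finset.filter_congr
      intro x hx
      rw [rkT]
      constructor
      · rintro ⟨h1, h2⟩
        refine ⟨h1, ?_⟩
        rw [Finset.mem_filter]
        push_neg
        intro _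
        omega
      · rintro ⟨h1, h2⟩
        refine ⟨h1, ?_⟩
        rw [Finset.mem_filter] at h2
        push_neg at h2
        have := h2 hx
        omega
    rw [hLHS, hseg, upper (n - j) j hj rfl, hseq_sub h d (n - j)]
end ARLaux
namespace ARLaux

variable {n : ℕ}

theorem CF_card {h : ℕ → ℕ} (h0 : h 0 = 1) (hu : UnimodalAtTails h) (d : ℕ) :
    (CF h (max (h 1) 1) d).card = h d := by
  have hP := Pmain (n := max (h 1) 1) h0 (growth_bound h0 hu) d (max (h 1) 1)
    (le_refl _)
  rw [Nat.sub_self] at hP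
  have heq : (CF h (max (h 1) 1) d).filter (fun m => maxVar m ≤ max (h 1) 1)
      = CF h (max (h 1) 1) d :=
    Finset.filter_true_of_mem (fun m _ => maxVar_le_n m)
  rw [heq] at hP
  exact hP

theorem CF_dominate {h : ℕ → ℕ} : ∀ D : ℕ, ∀ m' : Fin n → ℕ, mdeg m' = D →
    m' ∈ CF h n (mdeg m') → ∀ m : Fin n → ℕ, (∀ i, m i ≤ m' i) →
    m ∈ CF h n (mdeg m) := by
  intro D
  induction D using Nat.strong_induction_on with
  | _ D ihD =>
    intro m' hD hm' m hle
    rcases eq_or_ne m m' with rfl | hne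
    · exact hm'
    · have hex : ∃ i, m i < m' i := by
        by_contra hcon
        push_neg at hcon
        exact hne (funext fun i => le_antisymm (hle i) (hcon i))
      obtain ⟨i, hi⟩ := hex
      have hpos : 0 < m' i := by omega
      have hDpos : 0 < mdeg m' := by
        have := coord_le_mdeg m' i
        omega
      obtain ⟨e, he⟩ : ∃ e, mdeg m' = e + 1 := ⟨mdeg m' - 1, by omega⟩
      rw [he] at hm'
      have hsub : subE i m' ∈ CF h n e := CF_down hm' hpos
      have hmd : mdeg (subE i m') = e := by
        have := mdeg_subE hpos
        omega
      have hle' : ∀ k, m k ≤ subE i m' k := by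
        intro k
        rcases eq_or_ne k i with rfl | hki
        · rw [subE_self]
          omega
        · rw [subE_ne _ hki]
          exact hle k
      exact ihD e (by omega) (subE i m') hmd (by rwa [hmd]) m hle'

end ARLaux

theorem unimodal_at_tails_realizable' (h : ℕ → ℕ) (h0 : h 0 = 1)
    (hu : UnimodalAtTails h) :
    ∃ I : Set (Fin (max (h 1) 1) → ℕ),
      MonIdeal I ∧ ARL I ∧ ∀ d, hilb I d = h d := by
  classical
  refine ⟨{m | m ∉ ARLaux.CF h (max (h 1) 1) (mdeg m)}, ?_, ?_, ?_⟩
  · -- MonIdeal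
    intro m hm m' hle
    simp only [Set.mem_setOf_eq] at hm ⊢
    intro hm'
    exact hm (ARLaux.CF_dominate (mdeg m') m' rfl hm' m hle)
  · -- ARL
    intro M N hMG hdeg hgt
    simp only [Set.mem_setOf_eq]
    intro hM
    obtain ⟨hNI, hNmin⟩ := hMG
    simp only [Set.mem_setOf_eq] at hNI
    rcases Nat.eq_zero_or_pos (mdeg N) with hz | hpos
    · apply hNI
      rw [hz, ARLaux.CF, Finset.mem_singleton]
      exact ARLaux.mdeg_eq_zero hz
    · obtain ⟨e, he⟩ : ∃ e, mdeg N = e + 1 := ⟨mdeg N - 1, by omega⟩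
      have hNO : N ∈ ARLaux.OsetF (ARLaux.CF h (max (h 1) 1) e) (e + 1) := by
        rw [ARLaux.mem_OsetF]
        refine ⟨he, ?_⟩
        intro i hi
        have hne : ARLaux.subE i N ≠ N := by
          intro hcon
          have := congrFun hcon i
          rw [ARLaux.subE_self] at this
          omega
        have hnotI : ARLaux.subE i N ∉
            {m | m ∉ ARLaux.CF h (max (h 1) 1) (mdeg m)} := by
          intro hmem
          exact hne (hNmin _ hmem (fun k => by
            rcases eq_or_ne k i with rfl | hki
            · rw [ARLaux.subE_self]; omega
            · rw [ARLaux.subE_ne _ hki]))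
        simp only [Set.mem_setOf_eq, not_not] at hnotI
        have hmd : mdeg (ARLaux.subE i N) = e := by
          have := ARLaux.mdeg_subE hi
          omega
        rwa [hmd] at hnotI
      apply hNI
      rw [he]
      rw [hdeg, he] at hM
      exact ARLaux.CF_seg hM hNO (Or.inr hgt)
  · -- Hilbert function
    intro d
    rw [hilb]
    have hsets : {m : Fin (max (h 1) 1) → ℕ | mdeg m = d ∧
        m ∉ {m | m ∉ ARLaux.CF h (max (h 1) 1) (mdeg m)}}
        = ↑(ARLaux.CF h (max (h 1) 1) d) := by
      ext m
      simp only [Set.mem_setOf_eq, not_not, Finset.mem_coe]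
      constructor
      · rintro ⟨hd, hm⟩
        rwa [hd] at hm
      · intro hm
        exact ⟨ARLaux.mem_CF_mdeg hm, by rwa [ARLaux.mem_CF_mdeg hm]⟩
    rw [hsets, Set.ncard_coe_finset]
    exact ARLaux.CF_card h0 hu d

/-- A sequence that is unimodal at each tail is the Hilbert
function of an almost reverse lexicographic ideal in `k[x_1,…,x_n]` with
`n = h_1` if `h_1 ≥ 1` and `n = 1` otherwise. -/
theorem unimodal_at_tails_realizable (h : ℕ → ℕ) (h0 : h 0 = 1)
    (hu : UnimodalAtTails h) :
    ∃ I : Set (Fin (max (h 1) 1) → ℕ),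
      MonIdeal I ∧ ARL I ∧ ∀ d, hilb I d = h d := by
  exact unimodal_at_tails_realizable' h h0 hu
end

section
/- Let g_• = |n; d_1,...,d_m| and h_• = |n; d_1,...,d_m, s| be Fröberg sequences with s ≥ 1, and suppose g_• is unimodal at each tail. If there exists i ≥ 1 with h_i ≤ h_{i-1}, then h_d ≤ h_{d-1} for all d ≥ i. -/
open scoped Classical

private lemma fro_chain_le {f : ℕ → ℕ} {a : ℕ} (H : ∀ e, a < e → f e ≤ f (e - 1)) :
    ∀ b, a ≤ b → f b ≤ f a := by
  intro b hb
  induction b with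
  | zero => have : a = 0 := by omega
            simp [this]
  | succ b ih =>
    rcases Nat.lt_or_ge a (b + 1) with h | h
    · have h1 : f (b + 1) ≤ f b := by
        have := H (b + 1) h; simpa using this
      exact h1.trans (ih (by omega))
    · have : a = b + 1 := by omega
      simp [this]

private lemma fro_strict_chain {f : ℕ → ℕ} {y : ℕ} :
    ∀ x, (∀ e, y < e → e ≤ x → f (e - 1) < f e) → y < x → f y < f x := by
  intro x
  induction x with
  | zero => intro _ h; omega
  | succ x ih =>
    intro H hy
    rcases Nat.lt_or_ge y x with h | h
    · have h1 : f x < f (x + 1) := by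
        have := H (x + 1) (by omega) le_rfl; simpa using this
      exact (ih (fun e he1 he2 => H e he1 (by omega)) h).trans h1
    · have : y = x := by omega
      subst this
      have := H (y + 1) (by omega) le_rfl; simpa using this

private lemma fro_chain_mono {f : ℕ → ℕ} {c : ℕ} (H : ∀ e, 1 ≤ e → e ≤ c → f (e - 1) < f e) :
    ∀ a b, a ≤ b → b ≤ c → f a ≤ f b := by
  intro a b hab hbc
  induction b with
  | zero => have : a = 0 := by omega
            simp [this]
  | succ b ih =>
    rcases Nat.lt_or_ge a (b + 1) with h | h
    · have h1 : f b < f (b + 1) := by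
        have := H (b + 1) (by omega) hbc; simpa using this
      exact le_trans (ih (by omega) (by omega)) h1.le
    · have : a = b + 1 := by omega
      simp [this]

private lemma froPoly_append (ds : List ℕ) (s : ℕ) :
    froPoly (ds ++ [s]) = froPoly ds * (1 - Polynomial.X ^ s) := by
  unfold froPoly
  rw [List.map_append, List.prod_append]
  simp

private lemma froPoly_coeff_zero (ds : List ℕ) (hds : ∀ d ∈ ds, 1 ≤ d) :
    (froPoly ds).coeff 0 = 1 := by
  induction ds with
  | nil => simp [froPoly]
  | cons a t ih =>
    have ha : 1 ≤ a := hds a (by simp)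
    have ht : ∀ d ∈ t, 1 ≤ d := fun d hd => hds d (by simp [hd])
    have : froPoly (a :: t) = (1 - Polynomial.X ^ a) * froPoly t := by
      unfold froPoly; simp
    rw [this, Polynomial.mul_coeff_zero, ih ht]
    simp [Polynomial.coeff_X_pow]
    omega

private lemma froCoeff_zero (n : ℕ) (ds : List ℕ) (hds : ∀ d ∈ ds, 1 ≤ d) :
    froCoeff n ds 0 = 1 := by
  unfold froCoeff
  simp [froPoly_coeff_zero ds hds]

private lemma froCoeff_append (n : ℕ) (ds : List ℕ) (s : ℕ) (hs : 1 ≤ s) (i : ℕ) :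
    froCoeff n (ds ++ [s]) i
      = froCoeff n ds i - (if s ≤ i then froCoeff n ds (i - s) else 0) := by
  have hc : ∀ j, (froPoly (ds ++ [s])).coeff j
      = (froPoly ds).coeff j - (if s ≤ j then (froPoly ds).coeff (j - s) else 0) := by
    intro j
    rw [froPoly_append, mul_one_sub, Polynomial.coeff_sub, Polynomial.coeff_mul_X_pow']
  unfold froCoeff
  simp only [hc, sub_mul, Finset.sum_sub_distrib]
  congr 1
  simp only [ite_mul, zero_mul]
  rw [← Finset.sum_filter]
  by_cases hsi : s ≤ i
  · rw [if_pos hsi]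
    have hfil : (Finset.range (i + 1)).filter (fun j => s ≤ j) = Finset.Ico s (i + 1) := by
      ext x; simp [Finset.mem_range, Finset.mem_Ico]; omega
    rw [hfil, Finset.sum_Ico_eq_sum_range]
    have hrange : i + 1 - s = (i - s) + 1 := by omega
    rw [hrange]
    apply Finset.sum_congr rfl
    intro k hk
    simp only [Finset.mem_range] at hk
    have h1 : s + k - s = k := by omega
    have h2 : i - (s + k) = i - s - k := by omega
    rw [h1, h2]
  · rw [if_neg hsi]
    rw [Finset.sum_eq_zero]
    intro x hx
    simp only [Finset.mem_filter, Finset.mem_range] at hx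
    omega

private def fdel (G : ℕ → ℤ) (e : ℕ) : ℤ := if e = 0 then 1 else G e - G (e - 1)

private lemma fro_pos_prop (n : ℕ) (ds : List ℕ) (s : ℕ) (hs : 1 ≤ s) (d : ℕ)
    (hcond : ∀ j ≤ d, 0 < froCoeff n (ds ++ [s]) j) :
    ∀ j ≤ d, 0 < froCoeff n ds j := by
  intro j
  induction j using Nat.strong_induction_on with
  | _ j ih =>
    intro hj
    have h1 := hcond j hj
    rw [froCoeff_append n ds s hs j] at h1
    by_cases hsj : s ≤ j
    · rw [if_pos hsj] at h1
      have h2 := ih (j - s) (by omega) (by omega)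
      omega
    · rw [if_neg hsj] at h1; omega

/-- If `g = |n; d_1,…,d_m|` is unimodal at each tail and
`h = |n; d_1,…,d_m, s|` satisfies `h_i ≤ h_{i-1}` for some `i ≥ 1`, then
`h_d ≤ h_{d-1}` for all `d ≥ i`. -/
theorem fro_once_decreasing_stays_decreasing (n : ℕ) (ds : List ℕ)
    (hds : ∀ d ∈ ds, 1 ≤ d) (s : ℕ) (hs : 1 ≤ s)
    (hg : UnimodalAtTails (fro n ds)) :
    ∀ i, 1 ≤ i → fro n (ds ++ [s]) i ≤ fro n (ds ++ [s]) (i - 1) →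
      ∀ d, i ≤ d → fro n (ds ++ [s]) d ≤ fro n (ds ++ [s]) (d - 1) := by
  intro i hi hdec d hid
  by_cases hcond : ∀ j ≤ d, 0 < froCoeff n (ds ++ [s]) j
  · -- main case
    set g : ℕ → ℕ := fro n ds with hgdef
    have hd1 : 1 ≤ d := le_trans hi hid
    have hGpos : ∀ j ≤ d, 0 < froCoeff n ds j := fro_pos_prop n ds s hs d hcond
    have hgeq : ∀ j ≤ d, (g j : ℤ) = froCoeff n ds j := by
      intro j hj
      show ((fro n ds j : ℤ)) = froCoeff n ds j
      rw [fro, if_pos (fun k hk => hGpos k (hk.trans hj))]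
      exact Int.toNat_of_nonneg (hGpos j hj).le
    have hhval : ∀ j ≤ d, (fro n (ds ++ [s]) j : ℤ) = froCoeff n (ds ++ [s]) j := by
      intro j hj
      rw [fro, if_pos (fun k hk => hcond k (hk.trans hj))]
      exact Int.toNat_of_nonneg (hcond j hj).le
    have hG0 : froCoeff n ds 0 = 1 := froCoeff_zero n ds hds
    have hg0 : g 0 = 1 := by
      have := hgeq 0 (by omega); omega
    -- difference identity
    have hdiff : ∀ e, 1 ≤ e → e ≤ d →
        froCoeff n (ds ++ [s]) e - froCoeff n (ds ++ [s]) (e - 1)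
          = fdel (froCoeff n ds) e - (if s ≤ e then fdel (froCoeff n ds) (e - s) else 0) := by
      intro e he hed
      rw [froCoeff_append n ds s hs, froCoeff_append n ds s hs]
      split_ifs with h1 h2
      · -- s ≤ e and s ≤ e - 1, so e > s
        simp only [fdel, if_neg (show ¬ e = 0 by omega), if_neg (show ¬ e - s = 0 by omega)]
        have hix : e - 1 - s = e - s - 1 := by omega
        rw [hix]; ring
      · -- s ≤ e and ¬ s ≤ e - 1, so e = s
        have h0 : e - s = 0 := by omega
        rw [h0]
        simp only [fdel, if_neg (show ¬ e = 0 by omega), if_pos rfl]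
        rw [hG0]
        norm_num
        ring
      · omega
      · simp only [fdel, if_neg (show ¬ e = 0 by omega)]
        ring
    -- hypothesis in δ form
    have hdecZ : froCoeff n (ds ++ [s]) i ≤ froCoeff n (ds ++ [s]) (i - 1) := by
      have h1 := hhval i hid
      have h2 := hhval (i - 1) (by omega)
      omega
    have hhyp : fdel (froCoeff n ds) i ≤
        (if s ≤ i then fdel (froCoeff n ds) (i - s) else 0) := by
      have := hdiff i hi hid
      omega
    -- reduce goal
    suffices hgoal : fdel (froCoeff n ds) d ≤
        (if s ≤ d then fdel (froCoeff n ds) (d - s) else 0) by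
      have h1 := hdiff d hd1 le_rfl
      have h2 := hhval d le_rfl
      have h3 := hhval (d - 1) (by omega)
      omega
    -- the two big cases
    by_cases hA : ∃ r ∈ rset g 0, r ≤ d
    · -- g has weakly decreased by d
      obtain ⟨r, hrm, hrd⟩ := hA
      have hDval0 : Dval g ≤ 0 := Nat.sInf_le ⟨r, hrm⟩
      have hg0' : ∀ e, (∃ r ∈ rset g 0, r ≤ e) → g e ≤ g (e - 1) := by
        intro e he
        exact hg 0 hDval0 (by simp) e he
      have hδd : fdel (froCoeff n ds) d ≤ 0 := by
        have h1 := hg0' d ⟨r, hrm, hrd⟩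
        have e1 := hgeq d le_rfl
        have e2 := hgeq (d - 1) (by omega)
        simp only [fdel, if_neg (show ¬ d = 0 by omega)]
        omega
      by_cases hsd : s ≤ d
      · rw [if_pos hsd]
        by_cases hA1 : ∃ r' ∈ rset g 0, r' ≤ d - s
        · exfalso
          obtain ⟨r', hr'm, hr'⟩ := hA1
          have hchain : g d ≤ g (d - s) :=
            fro_chain_le (f := g) (a := d - s)
              (fun e he => hg0' e ⟨r', hr'm, by omega⟩) d (by omega)
          have hpos := hcond d le_rfl
          rw [froCoeff_append n ds s hs, if_pos hsd] at hpos
          have e1 := hgeq d le_rfl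
          have e2 := hgeq (d - s) (by omega)
          omega
        · -- d - s is in strictly increasing region (or is 0)
          have hδds : 0 ≤ fdel (froCoeff n ds) (d - s) := by
            by_cases h0 : d - s = 0
            · simp [fdel, h0]
            · have hnr : (d - s) ∉ rset g 0 := fun hmem => hA1 ⟨d - s, hmem, le_rfl⟩
              have hlt : g (d - s - 1) < g (d - s) := by
                by_contra hc
                refine hnr ⟨by omega, ?_⟩
                show g (d - s) ≤ g (d - s - 1)
                omega
              have e1 := hgeq (d - s) (by omega)
              have e2 := hgeq (d - s - 1) (by omega)
              simp only [fdel, if_neg h0]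
              omega
          omega
      · rw [if_neg hsd]; exact hδd
    · -- g strictly increasing on [0, d]
      have hinc : ∀ e, 1 ≤ e → e ≤ d → g (e - 1) < g e := by
        intro e h1 h2
        by_contra hc
        push_neg at hc
        exact hA ⟨e, ⟨h1, hc⟩, h2⟩
      have hG1 : ∀ e ≤ d, ((hseq g 1 e : ℤ)) = fdel (froCoeff n ds) e := by
        intro e he
        match e with
        | 0 => simp [hseq, fdel]
        | Nat.succ e =>
          have h1 := hinc (e + 1) (by omega) he
          simp only [Nat.add_sub_cancel] at h1
          have e1 := hgeq (e + 1) he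
          have e2 := hgeq e (by omega)
          show ((g (e + 1) - g e : ℕ) : ℤ) = fdel (froCoeff n ds) (e + 1)
          simp only [fdel, if_neg (show ¬ e + 1 = 0 by omega), Nat.add_sub_cancel]
          omega
      have hδpos : ∀ e, 1 ≤ e → e ≤ d → 1 ≤ fdel (froCoeff n ds) e := by
        intro e h1 h2
        have := hinc e h1 h2
        have e1 := hgeq e h2
        have e2 := hgeq (e - 1) (by omega)
        simp only [fdel, if_neg (show ¬ e = 0 by omega)]
        omega
      have hsi : s ≤ i := by
        by_contra hsi
        rw [if_neg (by omega)] at hhyp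
        have := hδpos i hi hid
        omega
      rw [if_pos hsi] at hhyp
      have hsd : s ≤ d := by omega
      rw [if_pos hsd]
      -- pass to ℕ level-1 sequence
      have hN : hseq g 1 i ≤ hseq g 1 (i - s) := by
        have h1 := hG1 i hid
        have h2 := hG1 (i - s) (by omega)
        omega
      -- find a decrease point for level 1
      have hex : ∃ e0, i - s < e0 ∧ e0 ≤ i ∧ hseq g 1 e0 ≤ hseq g 1 (e0 - 1) := by
        by_contra hc
        push_neg at hc
        have : hseq g 1 (i - s) < hseq g 1 i :=
          fro_strict_chain (f := hseq g 1) (y := i - s) i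
            (fun e he1 he2 => hc e he1 he2) (by omega)
        omega
      obtain ⟨e0, he01, he02, he03⟩ := hex
      have he0m : e0 ∈ rset g 1 := ⟨by omega, he03⟩
      have hDval1 : Dval g ≤ 1 := Nat.sInf_le ⟨e0, he0m⟩
      have hg1two : 1 < g 1 := by
        have h := hinc 1 le_rfl hd1
        norm_num at h
        omega
      have hg1' : ∀ e, (∃ r ∈ rset g 1, r ≤ e) → hseq g 1 e ≤ hseq g 1 (e - 1) :=
        hg 1 hDval1 (lt_max_iff.mpr (Or.inr hg1two))
      suffices hfin : hseq g 1 d ≤ hseq g 1 (d - s) by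
        have h1 := hG1 d le_rfl
        have h2 := hG1 (d - s) (by omega)
        omega
      by_cases hB1 : ∃ r' ∈ rset g 1, r' ≤ d - s
      · obtain ⟨r', hr'm, hr'⟩ := hB1
        exact fro_chain_le (f := hseq g 1) (a := d - s)
          (fun e he => hg1' e ⟨r', hr'm, by omega⟩) d (by omega)
      · have hmono : ∀ a b, a ≤ b → b ≤ d - s → hseq g 1 a ≤ hseq g 1 b := by
          refine fro_chain_mono (c := d - s) ?_
          intro e h1 h2
          by_contra hc
          push_neg at hc
          exact hB1 ⟨e, ⟨h1, hc⟩, h2⟩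
        have c1 : hseq g 1 d ≤ hseq g 1 i :=
          fro_chain_le (f := hseq g 1) (a := i)
            (fun e he => hg1' e ⟨e0, he0m, by omega⟩) d hid
        have c2 : hseq g 1 (i - s) ≤ hseq g 1 (d - s) := hmono _ _ (by omega) le_rfl
        omega
  · have h0 : fro n (ds ++ [s]) d = 0 := by
      rw [fro, if_neg hcond]
    simp [h0]
end
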